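/- arXiv:2603.01776 — 2 statements merged into one kernel-verified Lean document; each statement's English description precedes it below -/
import Mathlib

section
/- Let A be an m×n real matrix, B a p×q real matrix, and C an m×q real matrix. Suppose G satisfies A·G·A = A and H satisfies B·H·B = B, and suppose A·G·C·H·B = C. Then the full solution set of the equation A·X·B = C is exactly { G·C·H + Z − G·A·Z·B·H : Z an arbitrary n×p real matrix }; that is, every matrix of this form solves the equation, and every solution is of this form. -/
open Matrix

/-- General-solution statement of Penrose's lemma: if A·G·A = A, B·H·B = B and
A·G·C·H·B = C, then the solution set of A·X·B = C is exactly
{ G·C·H + Z − G·A·Z·B·H : Z arbitrary }. -/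
theorem penrose_general_solution {m n p q : ℕ}
    (A : Matrix (Fin m) (Fin n) ℝ) (B : Matrix (Fin p) (Fin q) ℝ)
    (C : Matrix (Fin m) (Fin q) ℝ)
    (G : Matrix (Fin n) (Fin m) ℝ) (H : Matrix (Fin q) (Fin p) ℝ)
    (hG : A * G * A = A) (hH : B * H * B = B)
    (hC : A * G * C * H * B = C) :
    {X : Matrix (Fin n) (Fin p) ℝ | A * X * B = C} =
      {X : Matrix (Fin n) (Fin p) ℝ |
        ∃ Z : Matrix (Fin n) (Fin p) ℝ, X = G * C * H + Z - G * A * Z * B * H} := by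
  ext X
  simp only [Set.mem_setOf_eq]
  constructor
  · intro hX
    refine ⟨X, ?_⟩
    have hX' : G * (A * X * B) = G * C := by rw [hX]
    simp only [← Matrix.mul_assoc] at hX'
    have h : G * A * X * B * H = G * C * H := by rw [hX']
    rw [h]
    abel
  · rintro ⟨Z, rfl⟩
    have h1 : A * (G * C * H) * B = C := by
      simp only [← Matrix.mul_assoc]
      exact hC
    have hH' : A * Z * (B * H * B) = A * Z * B := by rw [hH]
    simp only [← Matrix.mul_assoc] at hH'
    have h2 : A * (G * A * Z * B * H) * B = A * Z * B := by
      simp only [← Matrix.mul_assoc]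
      rw [hG, hH']
    rw [Matrix.mul_sub, Matrix.mul_add, Matrix.sub_mul, Matrix.add_mul, h1, h2]
    abel
end

section
/- Let X be an n×d real matrix, W an m×d real matrix, and let P_X and P_W be d×d real matrices satisfying X·P_X = X and P_W·Wᵀ = Wᵀ. Then for every d×d real matrix Z, the matrix M := Z − P_X·(Z − I)·P_W satisfies X·M·Wᵀ = X·Wᵀ. -/
open Matrix

/-- Forward direction of Proposition 1 (Beyond the Inverse): if X·P_X = X and
P_W·Wᵀ = Wᵀ, then for every Z the matrix M := Z − P_X·(Z − I)·P_W satisfies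
X·M·Wᵀ = X·Wᵀ. -/
theorem beyond_inverse_forward {n m d : ℕ}
    (X : Matrix (Fin n) (Fin d) ℝ) (W : Matrix (Fin m) (Fin d) ℝ)
    (PX PW : Matrix (Fin d) (Fin d) ℝ)
    (hX : X * PX = X) (hW : PW * Wᵀ = Wᵀ) :
    ∀ Z : Matrix (Fin d) (Fin d) ℝ,
      X * (Z - PX * (Z - 1) * PW) * Wᵀ = X * Wᵀ := by
  intro Z
  have : X * (Z - PX * (Z - 1) * PW) * Wᵀ
      = X * Z * Wᵀ - (X * PX) * (Z - 1) * (PW * Wᵀ) := by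
    simp [Matrix.sub_mul, Matrix.mul_sub, Matrix.mul_assoc]
  rw [this, hX, hW]
  simp [Matrix.sub_mul, Matrix.mul_sub]
end
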